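/- Let σ be the substitution σ(0)=01, σ(1)=00 on {0,1} and define T on X_σ × ℤ_3 by T(x,z)=(Sx, z+1). Let U = σ(X_σ) × ℤ_3 and define φ(x,z) = (σ(x), 2z). Then U is a clopen proper subset, the first return time of T to U is constantly 2, the induced map is T_U(x,z) = (S²x, z+2), and φ is a conjugacy from (X_σ × ℤ_3, T) to (U, T_U); hence the system is self-induced. -/

import Mathlib

open Set

/-- Return time function `r_A(x) = inf {n > 0 : Tⁿ x ∈ A}`. -/
noncomputable def retTime {α : Type*} (T : α → α) (A : Set α) (x : α) : ℕ :=
  sInf {n : ℕ | 0 < n ∧ T^[n] x ∈ A}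

/-- The extension of a substitution to words, by concatenation. -/
def substWord {A : Type*} (σ : A → List A) (w : List A) : List A :=
  w.foldr (fun a r => σ a ++ r) []

/-- The word `x[i..j]` read off a bi-infinite sequence. -/
def window {A : Type*} (x : ℤ → A) (i j : ℤ) : List A :=
  (List.range (j - i + 1).toNat).map fun t => x (i + t)

/-- The substitution subshift: all sequences whose subwords occur in some `σᵏ(a)`. -/
def SubSubshift {A : Type*} (σ : A → List A) : Set (ℤ → A) :=
  {x | ∀ i j : ℤ, i ≤ j → ∃ (a : A) (k : ℕ), window x i j <:+: (substWord σ)^[k] [a]}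

/-- The substitution `0 ↦ 01`, `1 ↦ 00` on the alphabet `{0,1}`. -/
def σ01 : Fin 2 → List (Fin 2) := fun a => if a = 0 then [0, 1] else [0, 0]

/-- The phase space: sequences times the `3`-adic integers. -/
abbrev P3 : Type := (ℤ → Fin 2) × ℤ_[3]

/-- The `n`-th power of the map `T(x,z) = (Sx, z+1)`. -/
noncomputable def Tmap (n : ℤ) (p : P3) : P3 := (fun i => p.1 (i + n), p.2 + (n : ℤ_[3]))

/-- The product system `X_σ × ℤ_3`. -/
def Y3 : Set P3 := {p | p.1 ∈ SubSubshift σ01}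

/-- The extension of `σ01` (constant length 2) to bi-infinite sequences. -/
def sigSeq (x : ℤ → Fin 2) : ℤ → Fin 2 := fun n =>
  if Int.emod n 2 = 0 then 0 else (if x (Int.ediv n 2) = 0 then 1 else 0)

/-- The map `φ(x,z) = (σ(x), 2z)`. -/
noncomputable def φ3 (p : P3) : P3 := (sigSeq p.1, 2 * p.2)

/-- The clopen set `U = σ(X_σ) × ℤ_3`. -/
def U3 : Set P3 := {p | p ∈ Y3 ∧ ∃ x ∈ SubSubshift σ01, sigSeq x = p.1}

lemma substWord_nil {A : Type*} (σ : A → List A) : substWord σ [] = [] := rfl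
lemma substWord_cons {A : Type*} (σ : A → List A) (a : A) (w : List A) :
    substWord σ (a :: w) = σ a ++ substWord σ w := rfl
lemma substWord_append {A : Type*} (σ : A → List A) (u v : List A) :
    substWord σ (u ++ v) = substWord σ u ++ substWord σ v := by
  induction u with
  | nil => simp [substWord_nil]
  | cons a u ih => simp [substWord_cons, ih]
lemma σ01_length (a : Fin 2) : (σ01 a).length = 2 := by
  unfold σ01; split <;> rfl
lemma substWord_length (w : List (Fin 2)) : (substWord σ01 w).length = 2 * w.length := by
  induction w with
  | nil => rfl
  | cons a w ih => simp [substWord_cons, σ01_length, ih]; ring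
lemma substWord_get_even (w : List (Fin 2)) (i : ℕ) (h : 2*i < (substWord σ01 w).length) :
    (substWord σ01 w)[2*i] = 0 := by
  induction w generalizing i with
  | nil => simp [substWord_nil] at h
  | cons a w ih =>
    show (σ01 a ++ substWord σ01 w)[2*i]'(by simpa [substWord_cons] using h) = 0
    rcases i with _ | i
    · simp only [Nat.mul_zero]
      rw [List.getElem_append_left (by rw [σ01_length]; omega)]
      unfold σ01; split <;> rfl
    · rw [List.getElem_append_right (by rw [σ01_length]; omega)]
      simp only [σ01_length, show 2*(i+1)-2 = 2*i from by omega]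
      apply ih
lemma substWord_get_odd (w : List (Fin 2)) (i : ℕ) (h : 2*i+1 < (substWord σ01 w).length) :
    (substWord σ01 w)[2*i+1] = (if w[i]'(by rw [substWord_length] at h; omega) = 0 then 1 else 0) := by
  induction w generalizing i with
  | nil => simp [substWord_nil] at h
  | cons a w ih =>
    show (σ01 a ++ substWord σ01 w)[2*i+1]'(by simpa [substWord_cons] using h) = _
    rcases i with _ | i
    · rw [List.getElem_append_left (by rw [σ01_length]; omega)]
      simp only [List.getElem_cons_zero]
      unfold σ01
      split <;> rename_i hs
      · simp [hs]
      · have : a = 1 := by omega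
        simp [this]
    · rw [List.getElem_append_right (by rw [σ01_length]; omega)]
      simp only [σ01_length, show 2*(i+1)+1-2 = 2*i+1 from by omega]
      rw [ih]
      congr 1
lemma iter_substWord_append {A : Type*} (σ : A → List A) (k : ℕ) (u v : List A) :
    (substWord σ)^[k] (u ++ v) = (substWord σ)^[k] u ++ (substWord σ)^[k] v := by
  induction k generalizing u v with
  | zero => rfl
  | succ k ih => rw [Function.iterate_succ_apply, Function.iterate_succ_apply,
      Function.iterate_succ_apply, substWord_append, ih]
lemma iter_length (k : ℕ) (a : Fin 2) : ((substWord σ01)^[k] [a]).length = 2^k := by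
  induction k generalizing a with
  | zero => rfl
  | succ k ih =>
    rw [Function.iterate_succ_apply]
    show ((substWord σ01)^[k] (σ01 a ++ [])).length = _
    rw [List.append_nil]
    have hs : σ01 a = [0] ++ [1] ∨ σ01 a = [0] ++ [0] := by
      unfold σ01; split; exacts [Or.inl rfl, Or.inr rfl]
    rcases hs with hs | hs
    · rw [hs, iter_substWord_append, List.length_append, ih, ih]; ring
    · rw [hs, iter_substWord_append, List.length_append, ih]; ring
lemma iter_get_even (k : ℕ) (hk : 1 ≤ k) (a : Fin 2) (i : ℕ)
    (h : 2*i < ((substWord σ01)^[k] [a]).length) :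
    ((substWord σ01)^[k] [a])[2*i] = 0 := by
  obtain ⟨m, rfl⟩ : ∃ m, k = m + 1 := ⟨k - 1, by omega⟩
  simp only [Function.iterate_succ_apply'] at h ⊢
  exact substWord_get_even _ i h
lemma infix_get {A : Type*} {u L : List A} (h : u <:+: L) :
    ∃ s, ∃ _ : s + u.length ≤ L.length, ∀ t (ht : t < u.length),
      L[s+t]'(by omega) = u[t] := by
  obtain ⟨p, q, rfl⟩ := h
  refine ⟨p.length, by simp only [List.length_append]; omega, fun t ht => ?_⟩
  rw [List.getElem_append_left (by simp only [List.length_append]; omega)]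
  rw [List.getElem_append_right (by omega)]
  congr 1
  omega
lemma infix_of_get {A : Type*} {u L : List A} (s : ℕ) (hs : s + u.length ≤ L.length)
    (hval : ∀ t (ht : t < u.length), u[t] = L[s+t]'(by omega)) : u <:+: L := by
  have hu : u = (L.drop s).take u.length := by
    apply List.ext_getElem
    · simp; omega
    · intro t h1 h2
      rw [List.getElem_take, List.getElem_drop]
      exact hval t h1
  rw [hu]
  exact ((L.drop s).take_prefix u.length).isInfix.trans (L.drop_suffix s).isInfix
lemma window_eq {A : Type*} (x : ℤ → A) (i j : ℤ) :
    window x i j = (List.range (j - i + 1).toNat).map (fun t : ℕ => x (i + (t:ℤ))) := by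
  unfold window
  simp only [List.pure_def, List.bind_eq_flatMap]
  induction (j - i + 1).toNat with
  | zero => rfl
  | succ n ih => simp [List.range_succ, ih]
lemma window_length {A : Type*} (x : ℤ → A) (i j : ℤ) :
    (window x i j).length = (j - i + 1).toNat := by
  rw [window_eq, List.length_map, List.length_range]
lemma window_get {A : Type*} (x : ℤ → A) (i j : ℤ) (t : ℕ) (h : t < (window x i j).length) :
    (window x i j)[t] = x (i + t) := by
  have h' := h
  rw [window_length] at h'
  rw [List.getElem_of_eq (window_eq x i j), List.getElem_map, List.getElem_range]
lemma window_infix {A : Type*} (x : ℤ → A) {i j i' j' : ℤ} (h0 : i ≤ j + 1) (h1 : i' ≤ i) (h2 : j ≤ j') :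
    window x i j <:+: window x i' j' := by
  have hl : (i - i').toNat + (window x i j).length ≤ (window x i' j').length := by
    rw [window_length, window_length]; omega
  refine infix_of_get _ hl (fun t ht => ?_)
  rw [window_get, window_get]
  congr 1
  rw [window_length] at ht
  push_cast
  omega
lemma window_shift {A : Type*} (x : ℤ → A) (n i j : ℤ) :
    window (fun m => x (m + n)) i j = window x (i + n) (j + n) := by
  apply List.ext_getElem
  · rw [window_length, window_length]; congr 2; ring
  · intro t h1 h2
    rw [window_get, window_get]
    congr 1
    ring
lemma sigSeq_even (x : ℤ → Fin 2) (k : ℤ) : sigSeq x (2*k) = 0 := by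
  have h : Int.emod (2*k) 2 = 0 := by show 2*k % 2 = 0; omega
  simp [sigSeq, h]
lemma sigSeq_odd (x : ℤ → Fin 2) (k : ℤ) :
    sigSeq x (2*k+1) = if x k = 0 then 1 else 0 := by
  have h1 : Int.emod (2*k+1) 2 = 1 := by show (2*k+1) % 2 = 1; omega
  have h2 : Int.ediv (2*k+1) 2 = k := by show (2*k+1) / 2 = k; omega
  simp [sigSeq, h1, h2]
lemma substWord_window (x : ℤ → Fin 2) (i j : ℤ) :
    substWord σ01 (window x i j) = window (sigSeq x) (2*i) (2*j+1) := by
  apply List.ext_getElem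
  · rw [substWord_length, window_length, window_length]; omega
  · intro t h1 h2
    rcases Nat.even_or_odd t with ⟨m, hm⟩ | ⟨m, hm⟩
    · have hm' : t = 2*m := by omega
      clear hm; subst hm'
      rw [substWord_get_even, window_get,
        show 2*i + ((2*m : ℕ) : ℤ) = 2*(i+m) from by push_cast; ring, sigSeq_even]
    · subst hm
      simp only [substWord_get_odd, window_get]
      rw [show 2*i + ((2*m+1 : ℕ) : ℤ) = 2*(i+(m:ℤ))+1 from by push_cast; ring, sigSeq_odd]
lemma substWord_infix {A : Type*} (σ : A → List A) {u v : List A} (h : u <:+: v) :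
    substWord σ u <:+: substWord σ v := by
  obtain ⟨p, q, rfl⟩ := h
  exact ⟨substWord σ p, substWord σ q, by rw [← substWord_append, ← substWord_append]⟩
lemma shift_mem {x : ℤ → Fin 2} (hx : x ∈ SubSubshift σ01) (n : ℤ) :
    (fun m => x (m + n)) ∈ SubSubshift σ01 := by
  intro i j hij
  obtain ⟨a, k, hw⟩ := hx (i + n) (j + n) (by omega)
  exact ⟨a, k, by rw [window_shift]; exact hw⟩
lemma sig_mem {x : ℤ → Fin 2} (hx : x ∈ SubSubshift σ01) :
    sigSeq x ∈ SubSubshift σ01 := by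
  intro i j hij
  have hdiv : i / 2 ≤ j / 2 := by omega
  obtain ⟨a, k, hw⟩ := hx (i / 2) (j / 2) hdiv
  refine ⟨a, k + 1, ?_⟩
  have h1 : window (sigSeq x) i j <:+: window (sigSeq x) (2*(i/2)) (2*(j/2)+1) :=
    window_infix _ (by omega) (by omega) (by omega)
  rw [← substWord_window] at h1
  refine h1.trans ?_
  rw [Function.iterate_succ_apply']
  exact substWord_infix _ hw
lemma window_single {A : Type*} (x : ℤ → A) (i : ℤ) : window x i i = [x i] := by
  apply List.ext_getElem
  · rw [window_length, List.length_singleton]; omega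
  · intro t h1 h2
    rw [window_length] at h1
    have ht : t = 0 := by omega
    subst ht
    rw [window_get]
    simp
lemma fin2_eq_one {v : Fin 2} (h : v ≠ 0) : v = 1 := by omega
lemma iter_get_even' (m : ℕ) (hm : 1 ≤ m) (a : Fin 2) (s : ℕ) (hpar : s % 2 = 0)
    (h : s < ((substWord σ01)^[m] [a]).length) :
    ((substWord σ01)^[m] [a])[s] = 0 := by
  obtain ⟨u, rfl⟩ : ∃ u, s = 2*u := ⟨s/2, by omega⟩
  exact iter_get_even m hm a u h
lemma not_one_one {x : ℤ → Fin 2} (hx : x ∈ SubSubshift σ01) (n : ℤ) :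
    ¬(x n = 1 ∧ x (n+1) = 1) := by
  rintro ⟨h1, h2⟩
  obtain ⟨a, m, hw⟩ := hx n (n+1) (by omega)
  have hl : (window x n (n+1)).length = 2 := by rw [window_length]; omega
  have hm : 1 ≤ m := by
    by_contra h
    have hm0 : m = 0 := by omega
    subst hm0
    have := hw.length_le
    simp [hl] at this
  obtain ⟨s, hs, hval⟩ := infix_get hw
  rw [hl] at hs
  have e0 : ((substWord σ01)^[m] [a])[s]'(by omega) = 1 := by
    have h' := hval 0 (by omega)
    rw [window_get, show n + ((0:ℕ):ℤ) = n from by simp, h1] at h'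
    simpa using h'
  have e1 : ((substWord σ01)^[m] [a])[s+1]'(by omega) = 1 := by
    have h' := hval 1 (by omega)
    rw [window_get, show n + ((1:ℕ):ℤ) = n+1 from by push_cast; ring, h2] at h'
    exact h'
  rcases Nat.even_or_odd s with ⟨u, hu⟩ | ⟨u, hu⟩
  · have h0 := iter_get_even' m hm a s (by omega) (by omega)
    rw [h0] at e0
    exact absurd e0 (by decide)
  · have h0 := iter_get_even' m hm a (s+1) (by omega) (by omega)
    rw [h0] at e1
    exact absurd e1 (by decide)
lemma ones_parity {x : ℤ → Fin 2} (hx : x ∈ SubSubshift σ01) {a b : ℤ}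
    (hab : a ≤ b) (ha : x a = 1) (hb : x b = 1) : (b - a) % 2 = 0 := by
  rcases eq_or_lt_of_le hab with rfl | hlt
  · simp
  obtain ⟨c, m, hw⟩ := hx a b hab
  have hl : (window x a b).length = (b - a + 1).toNat := window_length x a b
  have hm : 1 ≤ m := by
    by_contra h
    have hm0 : m = 0 := by omega
    subst hm0
    have hle := hw.length_le
    rw [hl] at hle
    simp at hle
    omega
  obtain ⟨s, hs, hval⟩ := infix_get hw
  rw [hl] at hs
  have e0 : ((substWord σ01)^[m] [c])[s]'(by omega) = 1 := by
    have h' := hval 0 (by rw [hl]; omega)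
    rw [window_get, show a + ((0:ℕ):ℤ) = a from by simp, ha] at h'
    simpa using h'
  have hxb : x (a + (((b - a).toNat:ℕ):ℤ)) = 1 := by
    rw [show a + (((b - a).toNat:ℕ):ℤ) = b from by omega]; exact hb
  have e1 : ((substWord σ01)^[m] [c])[s+(b - a).toNat]'(by omega) = 1 :=
    (hval (b - a).toNat (by rw [hl]; omega)).trans
      ((window_get x a b (b - a).toNat (by rw [hl]; omega)).trans hxb)
  have hso : s % 2 = 1 := by
    rcases Nat.even_or_odd s with ⟨u, hu⟩ | ⟨u, hu⟩
    · have h0 := iter_get_even' m hm c s (by omega) (by omega)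
      exact absurd (h0.symm.trans e0) (by decide)
    · omega
  have hsd : (s + (b - a).toNat) % 2 = 1 := by
    rcases Nat.even_or_odd (s + (b - a).toNat) with ⟨u, hu⟩ | ⟨u, hu⟩
    · have h0 := iter_get_even' m hm c (s + (b - a).toNat) (by omega) (by omega)
      exact absurd (h0.symm.trans e1) (by decide)
    · omega
  omega
def Wd (k : ℕ) : List (Fin 2) := (substWord σ01)^[2*k] [0]
def Bd (k : ℕ) : List (Fin 2) := (substWord σ01)^[2*k] [1]
def Dd (k : ℕ) : List (Fin 2) := Wd k ++ Wd k
lemma Wd_len (k : ℕ) : (Wd k).length = 4^k := by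
  rw [Wd, iter_length, pow_mul]; norm_num
lemma Bd_len (k : ℕ) : (Bd k).length = 4^k := by
  rw [Bd, iter_length, pow_mul]; norm_num
lemma Dd_len (k : ℕ) : (Dd k).length = 2 * 4^k := by
  rw [Dd, List.length_append, Wd_len]; ring
lemma Wd_succ (k : ℕ) : Wd (k+1) = Wd k ++ Bd k ++ Wd k ++ Wd k := by
  show (substWord σ01)^[2*(k+1)] [0] = _
  rw [show 2*(k+1) = 2*k + 2 from by ring, Function.iterate_add_apply]
  have h2 : (substWord σ01)^[2] [0] = [0] ++ [1] ++ [0] ++ [0] := by decide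
  rw [h2, iter_substWord_append, iter_substWord_append, iter_substWord_append]
  rfl
lemma Dd_eq (k : ℕ) : Dd k = (substWord σ01)^[2*k+1] [1] := by
  rw [Function.iterate_succ_apply]
  have h1 : substWord σ01 [1] = [0] ++ [0] := by decide
  rw [h1, iter_substWord_append]
  rfl
noncomputable def x0 : ℤ → Fin 2 :=
  fun n => (Dd (n.natAbs + 1)).getD (4^(n.natAbs+1) + n).toNat 0
lemma Dd_step (k : ℕ) (n : ℤ) (h : n.natAbs < 4^k) :
    (Dd (k+1)).getD (4^(k+1) + n).toNat 0 = (Dd k).getD (4^k + n).toNat 0 := by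
  have hD : Dd (k+1) = (Wd k ++ Bd k ++ Wd k) ++ (Dd k ++ (Bd k ++ Wd k ++ Wd k)) := by
    rw [Dd, Wd_succ, Dd]
    simp [List.append_assoc]
  have hlen : (Wd k ++ Bd k ++ Wd k).length = 3 * 4^k := by
    simp [Wd_len, Bd_len]; ring
  have hc : ((4^k : ℕ) : ℤ) = (4:ℤ)^k := by push_cast; ring
  have hidx : (4^(k+1) + n).toNat = 3 * 4^k + (4^k + n).toNat := by
    have h4 : (4:ℤ)^(k+1) = 4 * 4^k := by ring
    omega
  rw [hD, hidx, List.getD_append_right _ _ _ _ (by omega)]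
  rw [hlen, show 3 * 4^k + (4^k + n).toNat - 3 * 4^k = (4^k + n).toNat from by omega]
  rw [List.getD_append _ _ _ _ (by rw [Dd_len]; omega)]
lemma Dd_mono (k k' : ℕ) (hkk : k ≤ k') (n : ℤ) (h : n.natAbs < 4^k) :
    (Dd k).getD (4^k + n).toNat 0 = (Dd k').getD (4^k' + n).toNat 0 := by
  induction k' with
  | zero =>
    have : k = 0 := by omega
    subst this; rfl
  | succ m ih =>
    rcases Nat.lt_or_ge k (m+1) with hlt | hge
    · have h4 : (4:ℕ)^k ≤ 4^m := Nat.pow_le_pow_right (by norm_num) (by omega)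
      rw [ih (by omega) , Dd_step m n (by omega)]
    · have : k = m + 1 := by omega
      subst this; rfl
lemma x0_spec (k : ℕ) (n : ℤ) (h : n.natAbs < 4^k) :
    x0 n = (Dd k).getD (4^k + n).toNat 0 := by
  have hK : n.natAbs < 4^(n.natAbs + 1) := by
    have : n.natAbs < 4 ^ n.natAbs := Nat.lt_pow_self (by norm_num)
    have h4 : (4:ℕ)^n.natAbs ≤ 4^(n.natAbs+1) := Nat.pow_le_pow_right (by norm_num) (by omega)
    omega
  rcases Nat.le_total k (n.natAbs + 1) with hle | hle
  · rw [x0, ← Dd_mono k (n.natAbs+1) hle n h]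
  · rw [x0, Dd_mono (n.natAbs+1) k hle n hK]
lemma x0_mem : x0 ∈ SubSubshift σ01 := by
  intro i j hij
  set k := i.natAbs + j.natAbs + 1 with hk
  have hkk : k < 4^k := Nat.lt_pow_self (by norm_num)
  have hi : i.natAbs < 4^k := by omega
  have hj : j.natAbs < 4^k := by omega
  have hc : ((4^k : ℕ) : ℤ) = (4:ℤ)^k := by push_cast; ring
  refine ⟨1, 2*k+1, ?_⟩
  rw [← Dd_eq]
  have hl : (window x0 i j).length = (j - i + 1).toNat := window_length x0 i j
  have hbd : (4^k + i).toNat + (window x0 i j).length ≤ (Dd k).length := by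
    rw [hl, Dd_len]; omega
  refine infix_of_get _ hbd (fun t ht => ?_)
  rw [hl] at ht
  have hnt : (i + (t:ℤ)).natAbs < 4^k := by omega
  have hidx : (4^k + i).toNat + t = ((4:ℤ)^k + (i + (t:ℤ))).toNat := by omega
  rw [window_get, x0_spec k (i + (t:ℤ)) hnt,
    List.getD_eq_getElem _ _ (by rw [Dd_len]; omega)]
  congr 1
  omega
lemma sig_shift (x : ℤ → Fin 2) :
    sigSeq (fun m => x (m + 1)) = fun n => sigSeq x (n + 2) := by
  funext n
  rcases Int.even_or_odd n with ⟨m, hm⟩ | ⟨m, hm⟩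
  · rw [show n = 2*m from by omega, sigSeq_even,
      show 2*m+2 = 2*(m+1) from by ring, sigSeq_even]
  · rw [show n = 2*m+1 from by omega, sigSeq_odd,
      show 2*m+1+2 = 2*(m+1)+1 from by ring, sigSeq_odd]
lemma Tmap_add (m : ℤ) (p : P3) : Tmap 1 (Tmap m p) = Tmap (m+1) p := by
  unfold Tmap
  refine Prod.ext (funext fun i => ?_) ?_
  · simp only
    congr 1
    ring
  · simp only
    push_cast
    ring
lemma Tmap_iter (n : ℕ) (p : P3) : (Tmap 1)^[n] p = Tmap n p := by
  induction n with
  | zero =>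
    simp [Tmap]
  | succ n ih =>
    rw [Function.iterate_succ_apply', ih, Tmap_add]
    norm_num
lemma Tmap_mem_Y3 {p : P3} (hp : p ∈ Y3) (n : ℤ) : Tmap n p ∈ Y3 :=
  shift_mem hp n
lemma Tmap2_mem_U3 {p : P3} (hp : p ∈ U3) : Tmap 2 p ∈ U3 := by
  obtain ⟨hY, x, hx, hsig⟩ := hp
  refine ⟨Tmap_mem_Y3 hY 2, (fun m => x (m + 1)), shift_mem hx 1, ?_⟩
  rw [sig_shift]
  funext n
  show sigSeq x (n + 2) = p.1 (n + 2)
  rw [hsig]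
lemma not_U3_step {p : P3} (hp : p ∈ U3) : Tmap 1 p ∉ U3 := by
  obtain ⟨hY, x, hx, hsig⟩ := hp
  rintro ⟨hY', y, hy, hsig'⟩
  have hall : ∀ k : ℤ, x k = 1 := by
    intro k
    have h1 : sigSeq y (2*k) = (Tmap 1 p).1 (2*k) := congrFun hsig' (2*k)
    rw [sigSeq_even] at h1
    have h2 : (Tmap 1 p).1 (2*k) = p.1 (2*k+1) := rfl
    rw [h2, ← hsig, sigSeq_odd] at h1
    by_contra hne
    have hx0 : x k = 0 := by omega
    rw [hx0] at h1
    simp at h1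
  exact not_one_one hx 0 ⟨hall 0, hall 1⟩
lemma gel {A : Type*} (L : List A) {i j : ℕ} (h : i = j) (hi : i < L.length) :
    L[i]'hi = L[j]'(h ▸ hi) := by subst h; rfl
lemma fin2_if_inj : ∀ a b : Fin 2,
    ((if a = 0 then (1:Fin 2) else 0) = (if b = 0 then 1 else 0)) → a = b := by decide
lemma fin2_sing_infix : ∀ v : Fin 2, [v] <:+: [0, 1] := by decide
lemma desub {p : P3} (hp : p ∈ Y3) (hev : ∀ k : ℤ, p.1 (2*k) = 0) : p ∈ U3 := by
  classical
  set y : ℤ → Fin 2 := fun k => if p.1 (2*k+1) = 1 then (0:Fin 2) else 1 with hy_def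
  have hsig : sigSeq y = p.1 := by
    funext n
    rcases Int.even_or_odd n with ⟨m, hm⟩ | ⟨m, hm⟩
    · rw [show n = 2*m from by omega, sigSeq_even, hev m]
    · rw [show n = 2*m+1 from by omega, sigSeq_odd]
      by_cases hc : p.1 (2*m+1) = 1
      · rw [hc]
        simp [hy_def, hc]
      · have hc0 : p.1 (2*m+1) = 0 := by omega
        rw [hc0]
        simp [hy_def, hc0]
  have hy : y ∈ SubSubshift σ01 := by
    intro i j hij
    rcases eq_or_lt_of_le hij with rfl | hlt
    · refine ⟨0, 1, ?_⟩
      rw [window_single, show (substWord σ01)^[1] [0] = [0, 1] from by decide]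
      exact fin2_sing_infix _
    · obtain ⟨a, m, hw⟩ := hp (2*i) (2*j+1) (by omega)
      have hsw : substWord σ01 (window y i j) = window p.1 (2*i) (2*j+1) := by
        rw [substWord_window, hsig]
      rw [← hsw] at hw
      have hwl : (window y i j).length = (j - i + 1).toNat := window_length y i j
      have hwl2 : 2 ≤ (window y i j).length := by omega
      have hswl : (substWord σ01 (window y i j)).length = 2 * (window y i j).length :=
        substWord_length _
      have hm2 : 2 ≤ m := by
        have hle := hw.length_le
        rw [hswl, iter_length] at hle
        rcases m with _ | _ | m
        · simp at hle; omega
        · norm_num at hle; omega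
        · omega
      obtain ⟨m', rfl⟩ : ∃ m', m = m' + 1 := ⟨m - 1, by omega⟩
      have hv : (substWord σ01)^[m'+1] [a] = substWord σ01 ((substWord σ01)^[m'] [a]) :=
        Function.iterate_succ_apply' _ _ _
      rw [hv] at hw
      obtain ⟨s, hs, hval⟩ := infix_get hw
      rw [hswl, substWord_length] at hs
      rcases Nat.even_or_odd s with ⟨u, hu⟩ | ⟨u, hu⟩
      · -- aligned case
        have hu' : s = 2*u := by omega
        refine ⟨a, m', infix_of_get u (by omega) (fun t ht => ?_)⟩
        have hb1 : 2*t+1 < (substWord σ01 (window y i j)).length := by omega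
        have h1 := hval (2*t+1) hb1
        have hodd1 := substWord_get_odd (window y i j) t (by omega)
        have hvb : u + t < ((substWord σ01)^[m'] [a]).length := by omega
        have hodd2 := substWord_get_odd ((substWord σ01)^[m'] [a]) (u+t)
          (by rw [substWord_length]; omega)
        have hidx : s + (2*t+1) = 2*(u+t)+1 := by omega
        have h2 := gel (substWord σ01 ((substWord σ01)^[m'] [a])) hidx
          (by rw [substWord_length]; omega)
        have h3 := (h2.symm.trans h1).trans hodd1
        rw [hodd2] at h3
        exact (fin2_if_inj _ _ h3).symm
      · -- misaligned case
        exfalso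
        have key : ∀ t : ℕ, t < (window y i j).length →
            ∀ hvb : u + t < ((substWord σ01)^[m'] [a]).length,
            ((substWord σ01)^[m'] [a])[u+t]'hvb = 1 := by
          intro t ht hvb
          have hb1 : 2*t < (substWord σ01 (window y i j)).length := by omega
          have h1 := hval (2*t) hb1
          have hev1 := substWord_get_even (window y i j) t (by omega)
          have hodd2 := substWord_get_odd ((substWord σ01)^[m'] [a]) (u+t)
            (by rw [substWord_length]; omega)
          have hidx : s + 2*t = 2*(u+t)+1 := by omega
          have h2 := gel (substWord σ01 ((substWord σ01)^[m'] [a])) hidx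
            (by rw [substWord_length]; omega)
          have h3 := (h2.symm.trans h1).trans hev1
          rw [hodd2] at h3
          by_contra hne
          have h0 : ((substWord σ01)^[m'] [a])[u+t]'hvb = 0 := by omega
          rw [h0] at h3
          simp at h3
        have hvb0 : u + 0 < ((substWord σ01)^[m'] [a]).length := by omega
        have hvb1 : u + 1 < ((substWord σ01)^[m'] [a]).length := by omega
        have k0 := key 0 (by omega) hvb0
        have k1 := key 1 (by omega) hvb1
        have hm1 : 1 ≤ m' := by omega
        rcases Nat.even_or_odd u with ⟨w, hwu⟩ | ⟨w, hwu⟩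
        · have h0 := iter_get_even' m' hm1 a (u+0) (by omega) hvb0
          exact absurd (h0.symm.trans k0) (by decide)
        · have h0 := iter_get_even' m' hm1 a (u+1) (by omega) hvb1
          exact absurd (h0.symm.trans k1) (by decide)
  exact ⟨hp, y, hy, hsig⟩
lemma U3_evens {p : P3} (hp : p ∈ U3) (k : ℤ) : p.1 (2*k) = 0 := by
  obtain ⟨hY, x, hx, hsig⟩ := hp
  rw [← hsig, sigSeq_even]
lemma U3_char {p : P3} (hp : p ∈ Y3) : p ∈ U3 ↔ (p.1 1 = 1 ∨ p.1 3 = 1) := by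
  constructor
  · rintro ⟨hY, x, hx, hsig⟩
    have h := not_one_one hx 0
    have h1 : p.1 1 = sigSeq x (2*0+1) := by rw [hsig]; norm_num
    have h3 : p.1 3 = sigSeq x (2*1+1) := by rw [hsig]; norm_num
    rw [sigSeq_odd] at h1 h3
    by_cases hx0 : x 0 = 0
    · left; rw [h1, if_pos hx0]
    · right
      have hx1 : x (0+1) ≠ 1 := fun hc => h ⟨fin2_eq_one hx0, hc⟩
      have hx1' : x 1 = 0 := by
        have : x (0+1) = x 1 := by norm_num
        rw [this] at hx1
        omega
      rw [h3, if_pos hx1']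
  · intro hor
    apply desub hp
    intro k
    by_contra hne
    have hk1 : p.1 (2*k) = 1 := fin2_eq_one hne
    rcases hor with hb | hb
    · rcases le_total (2*k) 1 with hle | hle
      · have := ones_parity hp hle hk1 hb
        omega
      · have := ones_parity hp hle hb hk1
        omega
    · rcases le_total (2*k) 3 with hle | hle
      · have := ones_parity hp hle hk1 hb
        omega
      · have := ones_parity hp hle hb hk1
        omega
lemma two_isUnit : IsUnit (2 : ℤ_[3]) := by
  rw [PadicInt.isUnit_iff]
  apply le_antisymm (PadicInt.norm_le_one _)
  by_contra hlt
  push_neg at hlt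
  have h2 : ((2:ℤ) : ℤ_[3]) = (2 : ℤ_[3]) := by push_cast; ring
  have := (PadicInt.norm_int_lt_one_iff_dvd (p := 3) 2).1 (by rw [h2]; exact hlt)
  omega
theorem stmt14 :
    IsClopen {y : Y3 | (y : P3) ∈ U3} ∧ U3.Nonempty ∧ U3 ≠ Y3 ∧
    (∀ p ∈ U3, retTime (Tmap 1) U3 p = 2) ∧
    (∀ p ∈ U3, (Tmap 1)^[retTime (Tmap 1) U3 p] p = Tmap 2 p) ∧
    Continuous φ3 ∧ Set.BijOn φ3 Y3 U3 ∧
    (∀ p ∈ Y3, φ3 (Tmap 1 p) = Tmap 2 (φ3 p)) := by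
  have hret : ∀ p ∈ U3, retTime (Tmap 1) U3 p = 2 := by
    intro p hp
    have h2mem : 2 ∈ {n : ℕ | 0 < n ∧ (Tmap 1)^[n] p ∈ U3} := by
      refine ⟨by norm_num, ?_⟩
      rw [Tmap_iter]
      have : ((2:ℕ):ℤ) = 2 := by norm_num
      rw [this]
      exact Tmap2_mem_U3 hp
    have h1 : (Tmap 1)^[1] p ∉ U3 := by
      rw [Function.iterate_one]
      exact not_U3_step hp
    apply le_antisymm (Nat.sInf_le h2mem)
    apply le_csInf ⟨2, h2mem⟩
    rintro n ⟨hn0, hnm⟩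
    by_contra hlt
    have hn1 : n = 1 := by omega
    rw [hn1] at hnm
    exact h1 hnm
  refine ⟨?_, ?_, ?_, hret, ?_, ?_, ⟨?_, ?_, ?_⟩, ?_⟩
  · -- clopen
    have hset : {y : Y3 | (y : P3) ∈ U3}
        = Subtype.val ⁻¹' {p : P3 | p.1 1 = 1 ∨ p.1 3 = 1} := by
      ext y
      exact U3_char y.2
    rw [hset]
    have hcl : IsClopen {p : P3 | p.1 1 = 1 ∨ p.1 3 = 1} := by
      have c1 : Continuous (fun p : P3 => p.1 1) := (continuous_apply _).comp continuous_fst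
      have c3 : Continuous (fun p : P3 => p.1 3) := (continuous_apply _).comp continuous_fst
      have h1 : IsClopen {p : P3 | p.1 1 = 1} := (isClopen_discrete {1}).preimage c1
      have h3 : IsClopen {p : P3 | p.1 3 = 1} := (isClopen_discrete {1}).preimage c3
      exact h1.union h3
    exact hcl.preimage continuous_subtype_val
  · -- nonempty
    exact ⟨(sigSeq x0, 0), sig_mem x0_mem, x0, x0_mem, rfl⟩
  · -- ne
    intro heq
    have hpU : (sigSeq x0, (0:ℤ_[3])) ∈ U3 := ⟨sig_mem x0_mem, x0, x0_mem, rfl⟩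
    have h1 : Tmap 1 (sigSeq x0, (0:ℤ_[3])) ∈ Y3 := Tmap_mem_Y3 (sig_mem x0_mem) 1
    rw [← heq] at h1
    exact not_U3_step hpU h1
  · -- iterate
    intro p hp
    rw [hret p hp, Tmap_iter]
    norm_num
  · -- continuity
    apply Continuous.prodMk
    · apply continuous_pi
      intro n
      show Continuous fun p : P3 =>
        (fun v : Fin 2 => if Int.emod n 2 = 0 then (0:Fin 2) else if v = 0 then 1 else 0)
          (p.1 (Int.ediv n 2))
      exact Continuous.comp (continuous_of_discreteTopology
        (f := fun v : Fin 2 => if Int.emod n 2 = 0 then (0:Fin 2) else if v = 0 then 1 else 0))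
        ((continuous_apply _).comp continuous_fst)
    · exact (continuous_const.mul continuous_snd)
  · -- MapsTo
    intro p hp
    exact ⟨sig_mem hp, p.1, hp, rfl⟩
  · -- InjOn
    intro p hp q hq h
    have h1 : sigSeq p.1 = sigSeq q.1 := congrArg Prod.fst h
    have h2 : 2 * p.2 = 2 * q.2 := congrArg Prod.snd h
    refine Prod.ext ?_ (mul_left_cancel₀ (by norm_num : (2:ℤ_[3]) ≠ 0) h2)
    funext k
    have := congrFun h1 (2*k+1)
    rw [sigSeq_odd, sigSeq_odd] at this
    exact fin2_if_inj _ _ this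
  · -- SurjOn
    intro p hp
    obtain ⟨hY, x, hx, hsig⟩ := hp
    obtain ⟨u, hu2⟩ := two_isUnit
    refine ⟨(x, (↑u⁻¹ : ℤ_[3]) * p.2), hx, ?_⟩
    refine Prod.ext hsig ?_
    show 2 * ((↑u⁻¹ : ℤ_[3]) * p.2) = p.2
    rw [← hu2, ← mul_assoc, Units.mul_inv, one_mul]
  · -- equivariance
    intro p hp
    refine Prod.ext ?_ ?_
    · show sigSeq (fun i => p.1 (i + 1)) = fun i => sigSeq p.1 (i + 2)
      exact sig_shift p.1
    · show 2 * (p.2 + ((1:ℤ) : ℤ_[3])) = 2 * p.2 + ((2:ℤ) : ℤ_[3])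
      push_cast
      ring
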